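/- Let J_∞ ⊆ P be the ideal generated by {Dⁱ(g₁) : i ≥ 0} ∪ {Dⁱ(g₂) : i ≥ 0}, where g₁ = w⁽⁰⁾(w⁽⁰⁾ − (ℓ⁽⁰⁾)²) and g₂ = (ℓ⁽⁰⁾)³w⁽⁰⁾. Let r = ℓ⁽⁰⁾ℓ⁽²⁾w⁽⁰⁾ + (ℓ⁽¹⁾)²w⁽⁰⁾ − (1/2)(ℓ⁽⁰⁾)²w⁽²⁾ ∈ P. Then r ∉ J_∞; in particular the image of r in P/J_∞ is a nonzero nilpotent element. -/

import Mathlib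

open MvPolynomial

noncomputable section

/-- The polynomial ring `P = ℂ[ℓ⁽⁰⁾, ℓ⁽¹⁾, …, w⁽⁰⁾, w⁽¹⁾, …]`:
variables are indexed by `Fin 2 × ℕ`, where `(0, i)` is `ℓ⁽ⁱ⁾` and `(1, i)` is `w⁽ⁱ⁾`. -/
abbrev P : Type := MvPolynomial (Fin 2 × ℕ) ℂ

/-- The unique ℂ-linear derivation `D : P → P` with `D(ℓ⁽ⁱ⁾) = ℓ⁽ⁱ⁺¹⁾`, `D(w⁽ⁱ⁾) = w⁽ⁱ⁺¹⁾`. -/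
def D : Derivation ℂ P P :=
  MvPolynomial.mkDerivation ℂ (fun p : Fin 2 × ℕ => (X (p.1, p.2 + 1) : P))

/-- `ℓ⁽ⁱ⁾` -/
def lv (i : ℕ) : P := X (0, i)

/-- `w⁽ⁱ⁾` -/
def wv (i : ℕ) : P := X (1, i)

/-- `g₁ = w⁽⁰⁾(w⁽⁰⁾ − (ℓ⁽⁰⁾)²)`. -/
def g₁ : P := wv 0 * (wv 0 - lv 0 ^ 2)

/-- `g₂ = (ℓ⁽⁰⁾)³w⁽⁰⁾`. -/
def g₂ : P := lv 0 ^ 3 * wv 0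

/-- The ideal `J_∞` generated by all `Dⁱ(g₁)` and `Dⁱ(g₂)`, `i ≥ 0`. -/
def Jinf : Ideal P :=
  Ideal.span ((Set.range fun i : ℕ => (⇑D)^[i] g₁) ∪ (Set.range fun i : ℕ => (⇑D)^[i] g₂))

/-- `r = ℓ⁽⁰⁾ℓ⁽²⁾w⁽⁰⁾ + (ℓ⁽¹⁾)²w⁽⁰⁾ − (1/2)(ℓ⁽⁰⁾)²w⁽²⁾`. -/
def r : P := lv 0 * lv 2 * wv 0 + lv 1 ^ 2 * wv 0 - C ((1 : ℂ)/2) * lv 0 ^ 2 * wv 2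


lemma D_two : D (2 : P) = 0 := by
  have h : ((2:P)) = ((2:ℕ):P) := by norm_num
  rw [h, D.map_natCast]

lemma DX (p : Fin 2 × ℕ) : D (X p) = X (p.1, p.2 + 1) := by
  unfold D; rw [mkDerivation_X]

lemma Dg1_eq : D g₁ = 2*wv 0*wv 1 - 2*lv 0*lv 1*wv 0 - lv 0^2*wv 1 := by
  simp only [g₁, lv, wv, Derivation.leibniz, Derivation.leibniz_pow, map_sub, DX, smul_eq_mul,
    nsmul_eq_mul, Nat.cast_ofNat, pow_one]
  ring

lemma DDg1_eq : D (D g₁) = 2*wv 1^2 + 2*wv 0*wv 2 - 2*lv 1^2*wv 0 - 2*lv 0*lv 2*wv 0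
    - 4*lv 0*lv 1*wv 1 - lv 0^2*wv 2 := by
  rw [Dg1_eq]
  simp only [lv, wv, Derivation.leibniz, Derivation.leibniz_pow, map_sub, map_add, DX,
    smul_eq_mul, nsmul_eq_mul, Nat.cast_ofNat, pow_one, D_two]
  ring

lemma DB2_eq : (⇑D)^[2] (lv 0 ^ 2 * wv 0) = 2*lv 1^2*wv 0 + 2*lv 0*lv 2*wv 0
    + 4*lv 0*lv 1*wv 1 + lv 0^2*wv 2 := by
  show D (D (lv 0 ^2 * wv 0)) = _
  simp only [lv, wv, Derivation.leibniz, Derivation.leibniz_pow, map_add, DX,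
    smul_eq_mul, nsmul_eq_mul, Nat.cast_ofNat, pow_one, D_two]
  ring

def σw : Fin 2 × ℕ → ℕ × ℕ × ℕ := fun p => if p.1 = 0 then (1, 0, p.2) else (0, 1, p.2)

lemma σw_shift (p : Fin 2 × ℕ) : σw (p.1, p.2 + 1) = σw p + (0, 0, 1) := by
  rcases p with ⟨j, i⟩
  fin_cases j <;> simp [σw, Prod.ext_iff]

lemma weight_single (p : Fin 2 × ℕ) (k : ℕ) :
    Finsupp.weight σw (Finsupp.single p k) = k • σw p := by
  simp [Finsupp.weight_apply, Finsupp.sum_single_index]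

abbrev WH (q : P) (m : ℕ × ℕ × ℕ) : Prop := MvPolynomial.IsWeightedHomogeneous σw q m

lemma WH_D {q : P} {m : ℕ × ℕ × ℕ} (h : WH q m) : WH (D q) (m + (0,0,1)) := by
  rw [← support_sum_monomial_coeff q, map_sum]
  apply IsWeightedHomogeneous.sum
  intro d hd
  unfold D
  rw [mkDerivation_monomial]
  have : IsWeightedHomogeneous σw
      (d.sum fun i k => monomial (d - Finsupp.single i 1) ((k : ℂ)) • (X (i.1, i.2+1) : P)) (m + (0,0,1)) := by
    rw [Finsupp.sum]
    apply IsWeightedHomogeneous.sum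
    intro i hi
    rw [smul_eq_mul, X, monomial_mul, mul_one]
    apply isWeightedHomogeneous_monomial
    have hle : Finsupp.single i 1 ≤ d := by
      rw [Finsupp.single_le_iff]
      exact Nat.one_le_iff_ne_zero.mpr (Finsupp.mem_support_iff.mp hi)
    have hsum : (d - Finsupp.single i 1) + Finsupp.single i 1 = d := tsub_add_cancel_of_le hle
    have hw : Finsupp.weight σw (d - Finsupp.single i 1) + σw i = m := by
      have := congrArg (Finsupp.weight σw) hsum
      rw [map_add, weight_single, one_smul] at this
      rw [this]
      exact h (Finsupp.mem_support_iff.mp hd)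
    rw [map_add, weight_single, one_smul, σw_shift, ← add_assoc, hw]
  exact (weightedHomogeneousSubmodule ℂ σw _).smul_mem _ this

lemma WH_X (p : Fin 2 × ℕ) : WH (X p) (σw p) := isWeightedHomogeneous_X ℂ σw p

lemma WH_B : WH (lv 0 ^ 2 * wv 0) ((2:ℕ),(1:ℕ),(0:ℕ)) := by
  have h := ((WH_X (0,0)).mul (WH_X (0,0))).mul (WH_X (1,0))
  have e : (lv 0 ^2 * wv 0 : P) = X (0,0) * X (0,0) * X (1,0) := by rw [lv, wv]; ring
  rw [e]
  convert h using 1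
  simp [σw, Prod.ext_iff]

lemma WH_A : WH (wv 0 ^ 2) ((0:ℕ),(2:ℕ),(0:ℕ)) := by
  have h := (WH_X (1,0)).mul (WH_X (1,0))
  have e : (wv 0 ^2 : P) = X (1,0) * X (1,0) := by rw [wv]; ring
  rw [e]
  convert h using 1
  simp [σw, Prod.ext_iff]

lemma WH_G2 : WH (lv 0 ^ 3 * wv 0) ((3:ℕ),(1:ℕ),(0:ℕ)) := by
  have h := (((WH_X (0,0)).mul (WH_X (0,0))).mul (WH_X (0,0))).mul (WH_X (1,0))
  have e : (lv 0 ^3 * wv 0 : P) = X (0,0) * X (0,0) * X (0,0) * X (1,0) := by rw [lv, wv]; ring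
  rw [e]
  convert h using 1
  simp [σw, Prod.ext_iff]

lemma WH_iter {q : P} {a b : ℕ} (h : WH q (a,b,0)) (i : ℕ) : WH ((⇑D)^[i] q) (a,b,i) := by
  induction i with
  | zero => exact h
  | succ n ih =>
    rw [Function.iterate_succ_apply']
    have := WH_D ih
    convert this using 1
    simp [Prod.ext_iff]

def e1 : (Fin 2 × ℕ) →₀ ℕ := Finsupp.single (0,0) 1 + Finsupp.single (0,2) 1 + Finsupp.single (1,0) 1
def e2 : (Fin 2 × ℕ) →₀ ℕ := Finsupp.single (0,1) 2 + Finsupp.single (1,0) 1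
def e3 : (Fin 2 × ℕ) →₀ ℕ := Finsupp.single (0,0) 1 + Finsupp.single (0,1) 1 + Finsupp.single (1,1) 1
def e4 : (Fin 2 × ℕ) →₀ ℕ := Finsupp.single (0,0) 2 + Finsupp.single (1,2) 1

lemma we1 : Finsupp.weight σw e1 = ((2:ℕ),(1:ℕ),(2:ℕ)) := by
  simp [e1, map_add, weight_single, σw, Prod.ext_iff]
lemma we2 : Finsupp.weight σw e2 = ((2:ℕ),(1:ℕ),(2:ℕ)) := by
  simp [e2, map_add, weight_single, σw, Prod.ext_iff]
lemma we3 : Finsupp.weight σw e3 = ((2:ℕ),(1:ℕ),(2:ℕ)) := by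
  simp [e3, map_add, weight_single, σw, Prod.ext_iff]

lemma e1_ne_e2 : e1 ≠ e2 := by
  intro h; have := DFunLike.congr_fun h ((0:Fin 2),(2:ℕ))
  simp [e1, e2, Finsupp.single_apply, Prod.ext_iff, Fin.ext_iff] at this
lemma e1_ne_e3 : e1 ≠ e3 := by
  intro h; have := DFunLike.congr_fun h ((0:Fin 2),(2:ℕ))
  simp [e1, e3, Finsupp.single_apply, Prod.ext_iff, Fin.ext_iff] at this
lemma e1_ne_e4 : e1 ≠ e4 := by
  intro h; have := DFunLike.congr_fun h ((0:Fin 2),(2:ℕ))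
  simp [e1, e4, Finsupp.single_apply, Prod.ext_iff, Fin.ext_iff] at this
lemma e2_ne_e3 : e2 ≠ e3 := by
  intro h; have := DFunLike.congr_fun h ((0:Fin 2),(1:ℕ))
  simp [e2, e3, Finsupp.single_apply, Prod.ext_iff, Fin.ext_iff] at this
lemma e2_ne_e4 : e2 ≠ e4 := by
  intro h; have := DFunLike.congr_fun h ((0:Fin 2),(1:ℕ))
  simp [e2, e4, Finsupp.single_apply, Prod.ext_iff, Fin.ext_iff] at this
lemma e3_ne_e4 : e3 ≠ e4 := by
  intro h; have := DFunLike.congr_fun h ((1:Fin 2),(1:ℕ))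
  simp [e3, e4, Finsupp.single_apply, Prod.ext_iff, Fin.ext_iff] at this

lemma wsum_eq (u : (Fin 2 × ℕ) →₀ ℕ) :
    (Finsupp.weight σw u).1 + (Finsupp.weight σw u).2.1 = ∑ p ∈ u.support, u p := by
  rw [Finsupp.weight_apply, Finsupp.sum]
  rw [Prod.fst_sum]
  rw [Prod.snd_sum, Prod.fst_sum]
  rw [← Finset.sum_add_distrib]
  apply Finset.sum_congr rfl
  intro p _
  rcases p with ⟨j, i⟩
  fin_cases j <;> simp [σw]

lemma u_eq_zero {u : (Fin 2 × ℕ) →₀ ℕ} (h1 : (Finsupp.weight σw u).1 = 0)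
    (h2 : (Finsupp.weight σw u).2.1 = 0) : u = 0 := by
  have h := wsum_eq u
  rw [h1, h2] at h
  have hall := (Finset.sum_eq_zero_iff).mp h.symm
  ext p
  by_cases hp : p ∈ u.support
  · exact hall p hp
  · simpa using Finsupp.notMem_support_iff.mp hp

lemma coeff_mul_zero_l {q : P} {a b t : ℕ} (hq : WH q (a,b,t)) {e : (Fin 2 × ℕ) →₀ ℕ}
    (he : Finsupp.weight σw e = ((2:ℕ),(1:ℕ),(2:ℕ))) (ha : 2 < a) (p : P) :
    coeff e (p * q) = 0 := by
  rw [coeff_mul]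
  apply Finset.sum_eq_zero
  rintro ⟨u,v⟩ huv
  rw [Finset.HasAntidiagonal.mem_antidiagonal] at huv
  by_cases hv : coeff v q = 0
  · simp [hv]
  · exfalso
    have h1 := hq hv
    have h2 : Finsupp.weight σw u + Finsupp.weight σw v = ((2:ℕ),(1:ℕ),(2:ℕ)) := by
      rw [← map_add, huv, he]
    rw [h1] at h2
    have := congrArg Prod.fst h2
    simp [Prod.fst_add] at this
    omega

lemma coeff_mul_zero_w {q : P} {a b t : ℕ} (hq : WH q (a,b,t)) {e : (Fin 2 × ℕ) →₀ ℕ}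
    (he : Finsupp.weight σw e = ((2:ℕ),(1:ℕ),(2:ℕ))) (hb : 1 < b) (p : P) :
    coeff e (p * q) = 0 := by
  rw [coeff_mul]
  apply Finset.sum_eq_zero
  rintro ⟨u,v⟩ huv
  rw [Finset.HasAntidiagonal.mem_antidiagonal] at huv
  by_cases hv : coeff v q = 0
  · simp [hv]
  · exfalso
    have h1 := hq hv
    have h2 : Finsupp.weight σw u + Finsupp.weight σw v = ((2:ℕ),(1:ℕ),(2:ℕ)) := by
      rw [← map_add, huv, he]
    rw [h1] at h2
    have := congrArg (fun x : ℕ × ℕ × ℕ => x.2.1) h2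
    simp [Prod.snd_add, Prod.fst_add] at this
    omega

lemma coeff_mul_B {q : P} {t : ℕ} (hq : WH q (2,1,t)) {e : (Fin 2 × ℕ) →₀ ℕ}
    (he : Finsupp.weight σw e = ((2:ℕ),(1:ℕ),(2:ℕ))) (p : P) :
    coeff e (p * q) = coeff 0 p * coeff e q := by
  rw [coeff_mul]
  rw [Finset.sum_eq_single ((0 : (Fin 2 × ℕ) →₀ ℕ), e)]
  · rintro ⟨u,v⟩ huv hne
    rw [Finset.HasAntidiagonal.mem_antidiagonal] at huv
    by_cases hv : coeff v q = 0
    · simp [hv]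
    · exfalso
      have h1 := hq hv
      have h2 : Finsupp.weight σw u + Finsupp.weight σw v = ((2:ℕ),(1:ℕ),(2:ℕ)) := by
        rw [← map_add, huv, he]
      rw [h1] at h2
      have hf := congrArg Prod.fst h2
      have hs := congrArg (fun x : ℕ × ℕ × ℕ => x.2.1) h2
      simp [Prod.fst_add, Prod.snd_add] at hf hs
      have hu : u = 0 := u_eq_zero (by omega) (by omega)
      apply hne
      have hv' : v = e := by simpa [hu] using huv
      simp [hu, hv']
  · intro hmem
    exact absurd (Finset.HasAntidiagonal.mem_antidiagonal.mpr (zero_add e)) hmem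


lemma Xm (p : Fin 2 × ℕ) : (X p : P) = monomial (Finsupp.single p 1) 1 := rfl

lemma mono111 (p q s : Fin 2 × ℕ) (k : ℂ) :
    (monomial (Finsupp.single p 1 + Finsupp.single q 1 + Finsupp.single s 1) k : P)
      = C k * (X p * X q * X s) := by
  rw [Xm, Xm, Xm, monomial_mul, monomial_mul, C_mul_monomial]
  norm_num

lemma mono21 (p q : Fin 2 × ℕ) (k : ℂ) :
    (monomial (Finsupp.single p 2 + Finsupp.single q 1) k : P) = C k * (X p ^ 2 * X q) := by
  rw [X_pow_eq_monomial, Xm, monomial_mul, C_mul_monomial]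
  norm_num

lemma r_eq : r = monomial e1 1 + monomial e2 1 + monomial e4 (-(1/2 : ℂ)) := by
  rw [r, lv, lv, lv, wv, wv, e1, e2, e4, mono111, mono21, mono21]
  simp only [map_one, map_neg]
  ring

lemma iter_sub (i : ℕ) (a b : P) : (⇑D)^[i] (a - b) = (⇑D)^[i] a - (⇑D)^[i] b := by
  induction i with
  | zero => simp
  | succ n ih => rw [Function.iterate_succ_apply', Function.iterate_succ_apply',
      Function.iterate_succ_apply', ih, map_sub]

lemma DB2mon : (⇑D)^[2] (lv 0 ^ 2 * wv 0)
    = monomial e2 2 + monomial e1 2 + monomial e3 4 + monomial e4 1 := by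
  rw [DB2_eq, lv, lv, lv, wv, wv, wv, e1, e2, e3, e4, mono111, mono111, mono21, mono21]
  simp only [map_one, map_ofNat]
  ring


lemma lam_vanish {x : P} (hx : x ∈ Jinf) :
    ∀ p : P, coeff e1 (p*x) + coeff e2 (p*x) - coeff e3 (p*x) = 0 := by
  refine Submodule.span_induction ?_ ?_ ?_ ?_ hx
  · rintro y (⟨i, rfl⟩ | ⟨i, rfl⟩) p <;> dsimp only
    · have hgsub : (⇑D)^[i] g₁ = (⇑D)^[i] (wv 0^2) - (⇑D)^[i] (lv 0^2 * wv 0) := by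
        rw [← iter_sub]; congr 1; rw [g₁]; ring
      rw [hgsub, mul_sub]
      simp only [coeff_sub]
      rw [coeff_mul_zero_w (WH_iter WH_A i) we1 (by norm_num) p,
          coeff_mul_zero_w (WH_iter WH_A i) we2 (by norm_num) p,
          coeff_mul_zero_w (WH_iter WH_A i) we3 (by norm_num) p,
          coeff_mul_B (WH_iter WH_B i) we1 p,
          coeff_mul_B (WH_iter WH_B i) we2 p,
          coeff_mul_B (WH_iter WH_B i) we3 p]
      by_cases hi : i = 2
      · subst hi
        rw [DB2mon]
        simp only [coeff_add, coeff_monomial, if_pos rfl, if_neg e1_ne_e2, if_neg e1_ne_e3,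
          if_neg e1_ne_e4, if_neg e2_ne_e3, if_neg e2_ne_e4, if_neg e3_ne_e4,
          if_neg (Ne.symm e1_ne_e2), if_neg (Ne.symm e1_ne_e3), if_neg (Ne.symm e1_ne_e4),
          if_neg (Ne.symm e2_ne_e3), if_neg (Ne.symm e2_ne_e4), if_neg (Ne.symm e3_ne_e4),
          eq_self_iff_true, if_true]
        ring
      · have hne : ∀ e : (Fin 2 × ℕ) →₀ ℕ, Finsupp.weight σw e = ((2:ℕ),(1:ℕ),(2:ℕ)) →
            coeff e ((⇑D)^[i] (lv 0^2 * wv 0)) = 0 := by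
          intro e he
          refine (WH_iter WH_B i).coeff_eq_zero e ?_
          rw [he]
          intro hcon
          exact hi (congrArg (fun x : ℕ × ℕ × ℕ => x.2.2) hcon).symm
        rw [hne e1 we1, hne e2 we2, hne e3 we3]
        ring
    · have hg2 : (⇑D)^[i] g₂ = (⇑D)^[i] (lv 0^3 * wv 0) := rfl
      rw [hg2,
          coeff_mul_zero_l (WH_iter WH_G2 i) we1 (by norm_num) p,
          coeff_mul_zero_l (WH_iter WH_G2 i) we2 (by norm_num) p,
          coeff_mul_zero_l (WH_iter WH_G2 i) we3 (by norm_num) p]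
      ring
  · intro p; simp
  · intro x y _ _ ihx ihy p
    rw [mul_add]
    simp only [coeff_add]
    linear_combination ihx p + ihy p
  · intro a x _ ih p
    rw [smul_eq_mul, ← mul_assoc]
    exact ih (p * a)

lemma r_not_mem : r ∉ Jinf := by
  intro h
  have hv := lam_vanish h 1
  simp only [one_mul, r_eq] at hv
  simp only [coeff_add, coeff_monomial, if_pos rfl, if_neg e1_ne_e2, if_neg e1_ne_e4,
    if_neg e2_ne_e4, if_neg (Ne.symm e1_ne_e2), if_neg (Ne.symm e1_ne_e4),
    if_neg (Ne.symm e2_ne_e4), if_neg e1_ne_e3, if_neg e2_ne_e3,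
    if_neg (Ne.symm e3_ne_e4)] at hv
  norm_num at hv

lemma hc2 : (C ((1 : ℂ)/2) : P) * 2 = 1 := by
  have h2 : ((2 : P)) = C (2 : ℂ) := (map_ofNat C 2).symm
  rw [h2, ← map_mul]
  norm_num

lemma hc8 : (C ((1 : ℂ)/8) : P) * 8 = 1 := by
  have h8 : ((8 : P)) = C (8 : ℂ) := (map_ofNat C 8).symm
  rw [h8, ← map_mul]
  norm_num

lemma h2r : (2 : P) * r = 2*lv 0*lv 2*wv 0 + 2*lv 1^2*wv 0 - lv 0^2*wv 2 := by
  rw [r]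
  linear_combination (-(lv 0^2*wv 2)) * hc2

set_option maxHeartbeats 1000000 in
lemma E8 : (8 : P) * r^3 = ((-8) * lv 0 * lv 1 * wv 1 * wv 2 ^ 2 + 64 * lv 0 * lv 1 ^ 2 * lv 2 * wv 1 ^ 2 - 16 * lv 0 * lv 1 ^ 3 * wv 1 * wv 2 + 24 * lv 0 * lv 1 ^ 4 * lv 2 * wv 0 + 16 * lv 0 * lv 1 ^ 5 * wv 1 + 16 * lv 0 * lv 2 * wv 1 ^ 2 * wv 2 - 16 * lv 0 ^ 2 * lv 1 * lv 2 * wv 1 * wv 2 + 24 * lv 0 ^ 2 * lv 1 ^ 2 * lv 2 ^ 2 * wv 0 - 4 * lv 0 ^ 2 * lv 1 ^ 2 * wv 2 ^ 2 - 16 * lv 0 ^ 2 * lv 1 ^ 3 * lv 2 * wv 1 + 4 * lv 0 ^ 2 * lv 1 ^ 4 * wv 2 - 16 * lv 0 ^ 2 * lv 2 ^ 2 * wv 1 ^ 2 + 4 * lv 0 ^ 2 * wv 2 ^ 3 + 32 * lv 0 ^ 3 * lv 1 * lv 2 ^ 2 * wv 1 - 8 * lv 0 ^ 3 * lv 1 ^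 2 * lv 2 * wv 2 - 12 * lv 0 ^ 3 * lv 2 * wv 2 ^ 2 + 8 * lv 0 ^ 3 * lv 2 ^ 3 * wv 0 + 4 * lv 0 ^ 4 * lv 2 ^ 2 * wv 2 - 32 * lv 1 * lv 2 * wv 1 ^ 3 + 16 * lv 1 ^ 2 * wv 1 ^ 2 * wv 2 - 16 * lv 1 ^ 4 * wv 1 ^ 2 + 8 * lv 1 ^ 6 * wv 0) * g₁ + (4 * lv 0 * lv 1 * wv 0 * wv 2 ^ 2 - 16 * lv 0 * lv 1 ^ 2 * lv 2 * wv 0 * wv 1 - 8 * lv 0 * lv 2 * wv 0 * wv 1 * wv 2 - 8 * lv 0 ^ 2 * lv 1 * lv 2 * wv 1 ^ 2 - 8 * lv 0 ^ 2 * lv 1 ^ 3 * lv 2 * wv 0 + 8 * lv 0 ^ 2 * lv 2 ^ 2 * wv 0 * wv 1 + 2 * lv 0 ^ 2 * wv 1 * wv 2 ^ 2 - 8 * lv 0 ^ 3 * lv 1 * lv 2 ^ 2 * wv 0 - 4 * lv 0 ^ 3 * lv 1 * wv 2 ^ 2 + 16 * lv 0 ^ 3 * lv 1 ^ 2 * lv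 2 * wv 1 + 4 * lv 0 ^ 4 * lv 1 * lv 2 * wv 2 + 16 * lv 1 * lv 2 * wv 0 * wv 1 ^ 2 - 8 * lv 1 ^ 2 * wv 0 * wv 1 * wv 2 + 8 * lv 1 ^ 4 * wv 0 * wv 1) * D g₁ + (4 * lv 0 ^ 2 * lv 1 ^ 2 * wv 0 * wv 2 - 4 * lv 0 ^ 2 * lv 1 ^ 4 * wv 0 - 2 * lv 0 ^ 2 * wv 0 * wv 2 ^ 2 + 4 * lv 0 ^ 3 * lv 2 * wv 0 * wv 2 - 4 * lv 0 ^ 4 * lv 1 * lv 2 * wv 1 - 4 * lv 0 ^ 4 * lv 2 ^ 2 * wv 0 + lv 0 ^ 4 * wv 2 ^ 2) * (D (D g₁)) := by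
  have step : ((8:P)) * r^3 = (2*lv 0*lv 2*wv 0 + 2*lv 1^2*wv 0 - lv 0^2*wv 2)^3 := by
    calc ((8:P)) * r^3 = ((2:P)*r)^3 := by ring
    _ = _ := by rw [h2r]
  rw [step, DDg1_eq, Dg1_eq, g₁]
  ring

set_option maxHeartbeats 1000000 in
lemma r3_mem : r^3 ∈ Jinf := by
  have m0 : g₁ ∈ Jinf := Ideal.subset_span (Or.inl ⟨0, rfl⟩)
  have m1 : D g₁ ∈ Jinf := Ideal.subset_span (Or.inl ⟨1, rfl⟩)
  have m2 : D (D g₁) ∈ Jinf := Ideal.subset_span (Or.inl ⟨2, rfl⟩)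
  have key : r^3 = C ((1 : ℂ)/8) *
      (((-8) * lv 0 * lv 1 * wv 1 * wv 2 ^ 2 + 64 * lv 0 * lv 1 ^ 2 * lv 2 * wv 1 ^ 2 - 16 * lv 0 * lv 1 ^ 3 * wv 1 * wv 2 + 24 * lv 0 * lv 1 ^ 4 * lv 2 * wv 0 + 16 * lv 0 * lv 1 ^ 5 * wv 1 + 16 * lv 0 * lv 2 * wv 1 ^ 2 * wv 2 - 16 * lv 0 ^ 2 * lv 1 * lv 2 * wv 1 * wv 2 + 24 * lv 0 ^ 2 * lv 1 ^ 2 * lv 2 ^ 2 * wv 0 - 4 * lv 0 ^ 2 * lv 1 ^ 2 * wv 2 ^ 2 - 16 * lv 0 ^ 2 * lv 1 ^ 3 * lv 2 * wv 1 + 4 * lv 0 ^ 2 * lv 1 ^ 4 * wv 2 - 16 * lv 0 ^ 2 * lv 2 ^ 2 * wv 1 ^ 2 + 4 * lv 0 ^ 2 * wv 2 ^ 3 + 32 * lv 0 ^ 3 * lv 1 * lv 2 ^ 2 * wv 1 - 8 * lv 0 ^ 3 * lv 1 ^ 2 * lv 2 * wv 2 - 12 * lv 0 ^ 3 * lv 2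 * wv 2 ^ 2 + 8 * lv 0 ^ 3 * lv 2 ^ 3 * wv 0 + 4 * lv 0 ^ 4 * lv 2 ^ 2 * wv 2 - 32 * lv 1 * lv 2 * wv 1 ^ 3 + 16 * lv 1 ^ 2 * wv 1 ^ 2 * wv 2 - 16 * lv 1 ^ 4 * wv 1 ^ 2 + 8 * lv 1 ^ 6 * wv 0) * g₁ + (4 * lv 0 * lv 1 * wv 0 * wv 2 ^ 2 - 16 * lv 0 * lv 1 ^ 2 * lv 2 * wv 0 * wv 1 - 8 * lv 0 * lv 2 * wv 0 * wv 1 * wv 2 - 8 * lv 0 ^ 2 * lv 1 * lv 2 * wv 1 ^ 2 - 8 * lv 0 ^ 2 * lv 1 ^ 3 * lv 2 * wv 0 + 8 * lv 0 ^ 2 * lv 2 ^ 2 * wv 0 * wv 1 + 2 * lv 0 ^ 2 * wv 1 * wv 2 ^ 2 - 8 * lv 0 ^ 3 * lv 1 * lv 2 ^ 2 * wv 0 - 4 * lv 0 ^ 3 * lv 1 * wv 2 ^ 2 + 16 * lv 0 ^ 3 * lv 1 ^ 2 * lv 2 * wv 1 + 4 * lv 0 ^ 4 * lv 1 * lv 2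 * wv 2 + 16 * lv 1 * lv 2 * wv 0 * wv 1 ^ 2 - 8 * lv 1 ^ 2 * wv 0 * wv 1 * wv 2 + 8 * lv 1 ^ 4 * wv 0 * wv 1) * D g₁ + (4 * lv 0 ^ 2 * lv 1 ^ 2 * wv 0 * wv 2 - 4 * lv 0 ^ 2 * lv 1 ^ 4 * wv 0 - 2 * lv 0 ^ 2 * wv 0 * wv 2 ^ 2 + 4 * lv 0 ^ 3 * lv 2 * wv 0 * wv 2 - 4 * lv 0 ^ 4 * lv 1 * lv 2 * wv 1 - 4 * lv 0 ^ 4 * lv 2 ^ 2 * wv 0 + lv 0 ^ 4 * wv 2 ^ 2) * (D (D g₁))) := by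
    rw [← E8, ← mul_assoc, hc8, one_mul]
  rw [key]
  exact Ideal.mul_mem_left _ _ (Ideal.add_mem _ (Ideal.add_mem _
    (Ideal.mul_mem_left _ _ m0) (Ideal.mul_mem_left _ _ m1)) (Ideal.mul_mem_left _ _ m2))

/-- `r ∉ J_∞`; in particular the image of `r` in `P/J_∞` is a nonzero nilpotent element. -/
theorem r_not_mem_Jinf :
    r ∉ Jinf ∧ Ideal.Quotient.mk Jinf r ≠ 0 ∧ IsNilpotent (Ideal.Quotient.mk Jinf r) := by
  refine ⟨r_not_mem, ?_, 3, ?_⟩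
  · intro h0
    exact r_not_mem ((Ideal.Quotient.eq_zero_iff_mem).mp h0)
  · rw [← map_pow, Ideal.Quotient.eq_zero_iff_mem]
    exact r3_mem
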